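/- arXiv:hep-th/0305189 — 4 statements merged into one kernel-verified Lean document; each statement's English description precedes it below -/
import Mathlib

section
/- Let M be an N-periodic infinite symmetric tridiagonal matrix with nonzero off-diagonal entries y_i. If X is an N-periodic infinite matrix of maximal degree k (i.e., X^{(r)} = 0 for r > k) commuting with M, then there exist complex constants λ_i for i ≤ k such that X = Σ_{i ≤ k} λ_i M^i, where negative powers M^i are interpreted via the inverse of M in the ring of matrices of finite maximal degree. -/
namespace Toda

/-- Infinite ℤ×ℤ matrices over ℂ. -/
abbrev Mat : Type := ℤ → ℤ → ℂ

/-- Matrix multiplication (entrywise `tsum`; for band-type matrices these sums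
are finitely supported). -/
noncomputable def mul (X Y : Mat) : Mat := fun i j => ∑' k : ℤ, X i k * Y k j

/-- Commutator. -/
noncomputable def comm (X Y : Mat) : Mat := mul X Y - mul Y X

/-- Strictly upper triangular part. -/
def upper (X : Mat) : Mat := fun i j => if i < j then X i j else 0

/-- Strictly lower triangular part. -/
def lower (X : Mat) : Mat := fun i j => if j < i then X i j else 0

/-- Diagonal part. -/
def diagPart (X : Mat) : Mat := fun i j => if i = j then X i j else 0

/-- Identity matrix. -/
def one : Mat := fun i j => if i = j then 1 else 0

/-- Matrix powers. -/
noncomputable def pow (X : Mat) : ℕ → Mat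
  | 0 => one
  | m + 1 => mul X (pow X m)

/-- Evaluate a polynomial on a matrix. -/
noncomputable def evalPoly (A : Polynomial ℂ) (X : Mat) : Mat :=
  ∑ m ∈ Finset.range (A.natDegree + 1), A.coeff m • pow X m

/-- `N`-periodicity of entries. -/
def Periodic (N : ℕ) (X : Mat) : Prop := ∀ i j, X (i + N) (j + N) = X i j

/-- `X` has (pure) degree `k`: nonzero entries only on diagonal `j = i + k`. -/
def HasDegree (k : ℤ) (X : Mat) : Prop := ∀ i j, X i j ≠ 0 → j = i + k

/-- `X` has maximal degree `k`: entries vanish above diagonal `k`. -/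
def MaxDeg (k : ℤ) (X : Mat) : Prop := ∀ i j, X i j ≠ 0 → j - i ≤ k

/-- The infinite symmetric tridiagonal Toda Lax matrix with diagonal `φ` and
off-diagonal entries `y`. -/
def todaM (φ y : ℤ → ℂ) : Mat := fun i j =>
  if j = i then φ i
  else if j = i + 1 then y i
  else if i = j + 1 then y j
  else 0

/-- Degree-`r` component of a matrix. -/
def topPart (r : ℤ) (X : Mat) : Mat := fun i j => if j = i + r then X i j else 0

/-- Inverse of the degree-`r` component (a matrix of degree `-r`). -/
noncomputable def topInv (r : ℤ) (X : Mat) : Mat :=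
  fun i j => if j = i - r then (X j (j + r))⁻¹ else 0

/-- Entrywise geometric series `Σ_{k≥0} (-1)^k Q^k`, which is a finite sum in
each entry when `Q` has maximal degree `≤ -1`. -/
noncomputable def geomSeries (Q : Mat) : Mat :=
  fun i j => ∑ m ∈ Finset.range ((i - j).toNat + 1), (-1 : ℂ) ^ m * pow Q m i j

/-- The inverse `R⁻¹ = (R^{(r)})⁻¹ Σ_{k≥0} (-1)^k (R̃ (R^{(r)})⁻¹)^k` of a matrix
of maximal degree `r` with invertible top component. -/
noncomputable def geomInv (r : ℤ) (R : Mat) : Mat :=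
  mul (topInv r R) (geomSeries (mul (R - topPart r R) (topInv r R)))

/-- Integer powers of a matrix, negative powers via the geometric-series inverse. -/
noncomputable def intPow (X : Mat) (m : ℤ) : Mat :=
  if 0 ≤ m then pow X m.toNat else pow (geomInv 1 X) (-m).toNat

/-- Shift operator `Z = D^N`. -/
def shiftZ (N : ℕ) : Mat := fun i j => if j = i + N then 1 else 0

/-- Inverse shift `Z⁻¹`. -/
def shiftZinv (N : ℕ) : Mat := fun i j => if j = i - N then 1 else 0

/-- The finite `N×N` periodic Toda Lax matrix with spectral parameter `z`,
diagonal `p`, off-diagonal entries `y 1, …, y (N-1)` and corner entries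
`y 0 * z`, `y 0 * z⁻¹`. -/
noncomputable def laxFin (N : ℕ) (p y : ℕ → ℂ) (z : ℂ) :
    Matrix (Fin N) (Fin N) ℂ := fun i j =>
  if (i : ℕ) = j then p i
  else if (j : ℕ) = i + 1 then y (i + 1)
  else if (i : ℕ) = j + 1 then y (j + 1)
  else if (i : ℕ) = 0 ∧ (j : ℕ) = N - 1 then y 0 * z
  else if (i : ℕ) = N - 1 ∧ (j : ℕ) = 0 then y 0 * z⁻¹
  else 0

/-- Embedding of polynomials in `x` into the field `ℂ((x⁻¹))` of Laurent series
at infinity, sending `x` to the inverse of the local parameter. -/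
noncomputable def atInf (p : Polynomial ℂ) : LaurentSeries ℂ :=
  Polynomial.eval₂ HahnSeries.C (HahnSeries.single (-1 : ℤ) 1) p

section Aux

lemma maxDeg_of_le {a b : ℤ} {X : Mat} (h : MaxDeg a X) (hab : a ≤ b) : MaxDeg b X :=
  fun i j hij => le_trans (h i j hij) hab

lemma maxDeg_one : MaxDeg 0 one := by
  intro i j h
  unfold one at h
  split_ifs at h with h1
  · omega
  · exact absurd rfl h

lemma mul_apply_eq_sum {a b : ℤ} {X Y : Mat} (hX : MaxDeg a X) (hY : MaxDeg b Y) (i j : ℤ) :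
    mul X Y i j = ∑ m ∈ Finset.Icc (j - b) (i + a), X i m * Y m j := by
  refine tsum_eq_sum ?_
  intro m hm
  simp only [Finset.mem_Icc, not_and_or, not_le] at hm
  rcases hm with h | h
  · rcases eq_or_ne (Y m j) 0 with h0 | h0
    · simp [h0]
    · have := hY m j h0; omega
  · rcases eq_or_ne (X i m) 0 with h0 | h0
    · simp [h0]
    · have := hX i m h0; omega

lemma maxDeg_mul {a b : ℤ} {X Y : Mat} (hX : MaxDeg a X) (hY : MaxDeg b Y) :
    MaxDeg (a + b) (mul X Y) := by
  intro i j h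
  by_contra hc
  push_neg at hc
  apply h
  rw [mul_apply_eq_sum hX hY]
  refine Finset.sum_eq_zero fun m _ => ?_
  rcases eq_or_ne (X i m) 0 with h0 | h0
  · simp [h0]
  rcases eq_or_ne (Y m j) 0 with h1 | h1
  · simp [h1]
  have := hX i m h0; have := hY m j h1; omega

lemma mul_assoc' {a b c : ℤ} {X Y Z : Mat} (hX : MaxDeg a X) (hY : MaxDeg b Y)
    (hZ : MaxDeg c Z) : mul (mul X Y) Z = mul X (mul Y Z) := by
  funext i j
  rw [mul_apply_eq_sum (maxDeg_mul hX hY) hZ, mul_apply_eq_sum hX (maxDeg_mul hY hZ)]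
  have h1 : ∀ m ∈ Finset.Icc (j - c) (i + (a + b)),
      mul X Y i m = ∑ l ∈ Finset.Icc (j - (b + c)) (i + a), X i l * Y l m := by
    intro m hm
    rw [Finset.mem_Icc] at hm
    refine tsum_eq_sum fun l hl => ?_
    simp only [Finset.mem_Icc, not_and_or, not_le] at hl
    rcases hl with h | h
    · rcases eq_or_ne (Y l m) 0 with h0 | h0
      · simp [h0]
      · have := hY l m h0; omega
    · rcases eq_or_ne (X i l) 0 with h0 | h0
      · simp [h0]
      · have := hX i l h0; omega
  have h2 : ∀ l ∈ Finset.Icc (j - (b + c)) (i + a),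
      mul Y Z l j = ∑ m ∈ Finset.Icc (j - c) (i + (a + b)), Y l m * Z m j := by
    intro l hl
    rw [Finset.mem_Icc] at hl
    refine tsum_eq_sum fun m hm => ?_
    simp only [Finset.mem_Icc, not_and_or, not_le] at hm
    rcases hm with h | h
    · rcases eq_or_ne (Z m j) 0 with h0 | h0
      · simp [h0]
      · have := hZ m j h0; omega
    · rcases eq_or_ne (Y l m) 0 with h0 | h0
      · simp [h0]
      · have := hY l m h0; omega
  calc ∑ m ∈ Finset.Icc (j - c) (i + (a + b)), mul X Y i m * Z m j
      = ∑ m ∈ Finset.Icc (j - c) (i + (a + b)),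
          ∑ l ∈ Finset.Icc (j - (b + c)) (i + a), X i l * Y l m * Z m j := by
        refine Finset.sum_congr rfl fun m hm => ?_
        rw [h1 m hm, Finset.sum_mul]
    _ = ∑ l ∈ Finset.Icc (j - (b + c)) (i + a),
          ∑ m ∈ Finset.Icc (j - c) (i + (a + b)), X i l * Y l m * Z m j := Finset.sum_comm
    _ = ∑ l ∈ Finset.Icc (j - (b + c)) (i + a), X i l * mul Y Z l j := by
        refine Finset.sum_congr rfl fun l hl => ?_
        rw [h2 l hl, Finset.mul_sum]
        exact Finset.sum_congr rfl fun m _ => by ring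

lemma mul_one' (X : Mat) : mul X one = X := by
  funext i j
  refine (tsum_eq_single j ?_).trans ?_
  · intro k hk
    have : one k j = 0 := by unfold one; rw [if_neg hk]
    rw [this, mul_zero]
  · have : one j j = 1 := if_pos rfl
    rw [this, mul_one]

lemma one_mul' (X : Mat) : mul one X = X := by
  funext i j
  refine (tsum_eq_single i ?_).trans ?_
  · intro k hk
    have : one i k = 0 := by unfold one; rw [if_neg (Ne.symm hk)]
    rw [this, zero_mul]
  · have : one i i = 1 := if_pos rfl
    rw [this, one_mul]

lemma maxDeg_sub {a : ℤ} {X Y : Mat} (hX : MaxDeg a X) (hY : MaxDeg a Y) :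
    MaxDeg a (X - Y) := by
  intro i j h
  simp only [Pi.sub_apply] at h
  rcases eq_or_ne (X i j) 0 with h0 | h0
  · rcases eq_or_ne (Y i j) 0 with h1 | h1
    · rw [h0, h1, sub_zero] at h; exact absurd rfl h
    · exact hY i j h1
  · exact hX i j h0

lemma maxDeg_add {a : ℤ} {X Y : Mat} (hX : MaxDeg a X) (hY : MaxDeg a Y) :
    MaxDeg a (X + Y) := by
  intro i j h
  simp only [Pi.add_apply] at h
  rcases eq_or_ne (X i j) 0 with h0 | h0
  · rcases eq_or_ne (Y i j) 0 with h1 | h1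
    · rw [h0, h1, add_zero] at h; exact absurd rfl h
    · exact hY i j h1
  · exact hX i j h0

lemma mul_sub_left {a b : ℤ} {X Y Z : Mat} (hX : MaxDeg a X) (hY : MaxDeg a Y)
    (hZ : MaxDeg b Z) : mul (X - Y) Z = mul X Z - mul Y Z := by
  funext i j
  simp only [Pi.sub_apply]
  rw [mul_apply_eq_sum (maxDeg_sub hX hY) hZ, mul_apply_eq_sum hX hZ,
    mul_apply_eq_sum hY hZ, ← Finset.sum_sub_distrib]
  exact Finset.sum_congr rfl fun m _ => by simp only [Pi.sub_apply]; ring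

lemma mul_add_left {a b : ℤ} {X Y Z : Mat} (hX : MaxDeg a X) (hY : MaxDeg a Y)
    (hZ : MaxDeg b Z) : mul (X + Y) Z = mul X Z + mul Y Z := by
  funext i j
  simp only [Pi.add_apply]
  rw [mul_apply_eq_sum (maxDeg_add hX hY) hZ, mul_apply_eq_sum hX hZ,
    mul_apply_eq_sum hY hZ, ← Finset.sum_add_distrib]
  exact Finset.sum_congr rfl fun m _ => by simp only [Pi.add_apply]; ring

lemma mul_sub_right {a b : ℤ} {X Y Z : Mat} (hX : MaxDeg a X) (hY : MaxDeg b Y)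
    (hZ : MaxDeg b Z) : mul X (Y - Z) = mul X Y - mul X Z := by
  funext i j
  simp only [Pi.sub_apply]
  rw [mul_apply_eq_sum hX (maxDeg_sub hY hZ), mul_apply_eq_sum hX hY,
    mul_apply_eq_sum hX hZ, ← Finset.sum_sub_distrib]
  exact Finset.sum_congr rfl fun m _ => by simp only [Pi.sub_apply]; ring

lemma mul_smul_left (c : ℂ) (X Y : Mat) : mul (c • X) Y = c • mul X Y := by
  funext i j
  show ∑' k : ℤ, (c • X) i k * Y k j = c * ∑' k : ℤ, X i k * Y k j
  rw [← tsum_mul_left]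
  exact tsum_congr fun k => by simp only [Pi.smul_apply, smul_eq_mul]; ring

lemma pow_succ'' {a : ℤ} {X : Mat} (hX : MaxDeg a X) (n : ℕ) :
    pow X (n + 1) = mul (pow X n) X := by
  induction n with
  | zero => show mul X one = mul one X; rw [mul_one', one_mul']
  | succ n ih =>
      have hpn : MaxDeg (n * a) (pow X n) := by
        clear ih
        induction n with
        | zero => simp only [Nat.cast_zero, zero_mul]; exact maxDeg_one
        | succ n ih =>
            have := maxDeg_mul hX ih
            refine maxDeg_of_le this (by push_cast; ring_nf; omega)
      show mul X (pow X (n + 1)) = mul (pow X (n + 1)) X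
      conv_lhs => rw [ih]
      rw [← mul_assoc' hX hpn hX]
      rfl

lemma maxDeg_pow {a : ℤ} {X : Mat} (hX : MaxDeg a X) (n : ℕ) : MaxDeg (n * a) (pow X n) := by
  induction n with
  | zero => simp only [Nat.cast_zero, zero_mul]; exact maxDeg_one
  | succ n ih =>
      have := maxDeg_mul hX ih
      refine maxDeg_of_le this (by push_cast; ring_nf; omega)

end Aux

section Geom

lemma maxDeg_pow_neg {X : Mat} (hQ : MaxDeg (-1) X) (n : ℕ) : MaxDeg (-(n : ℤ)) (pow X n) :=
  maxDeg_of_le (maxDeg_pow hQ n) (by rw [mul_neg_one])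

lemma pow_neg_apply_eq_zero {X : Mat} (hQ : MaxDeg (-1) X) {n : ℕ} {i j : ℤ}
    (h : i - j < n) : pow X n i j = 0 := by
  by_contra h0
  have := maxDeg_pow_neg hQ n i j h0
  omega

lemma geomSeries_eq_sum {Q : Mat} (hQ : MaxDeg (-1) Q) {i j : ℤ} {n : ℕ}
    (hn : (i - j).toNat + 1 ≤ n) :
    geomSeries Q i j = ∑ m ∈ Finset.range n, (-1 : ℂ) ^ m * pow Q m i j := by
  unfold geomSeries
  refine Finset.sum_subset (Finset.range_subset_range.mpr hn) ?_
  intro m hm hm'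
  simp only [Finset.mem_range] at hm hm'
  rw [pow_neg_apply_eq_zero hQ (by omega), mul_zero]

lemma maxDeg_geomSeries {Q : Mat} (hQ : MaxDeg (-1) Q) : MaxDeg 0 (geomSeries Q) := by
  intro i j h
  by_contra hc
  push_neg at hc
  apply h
  unfold geomSeries
  refine Finset.sum_eq_zero fun m _ => ?_
  match m with
  | 0 =>
    have : pow Q 0 i j = 0 := by
      show one i j = 0
      unfold one
      rw [if_neg (by omega)]
    rw [this, mul_zero]
  | m + 1 => rw [pow_neg_apply_eq_zero hQ (by omega), mul_zero]

lemma geom_left {Q : Mat} (hQ : MaxDeg (-1) Q) (i j : ℤ) :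
    geomSeries Q i j + mul Q (geomSeries Q) i j = one i j := by
  have hG := maxDeg_geomSeries hQ
  set n := (i - j).toNat + 1 with hn
  have e1 : mul Q (geomSeries Q) i j
      = ∑ k ∈ Finset.Icc (j - 0) (i + (-1)), Q i k * geomSeries Q k j :=
    mul_apply_eq_sum hQ hG i j
  have e2 : ∀ k ∈ Finset.Icc (j - 0) (i + (-1)),
      Q i k * geomSeries Q k j = ∑ m ∈ Finset.range n, (-1 : ℂ) ^ m * (Q i k * pow Q m k j) := by
    intro k hk
    rw [Finset.mem_Icc] at hk
    rw [geomSeries_eq_sum hQ (n := n) (by omega), Finset.mul_sum]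
    exact Finset.sum_congr rfl fun m _ => by ring
  have e3 : ∀ m : ℕ, ∑ k ∈ Finset.Icc (j - 0) (i + (-1)), Q i k * pow Q m k j
      = pow Q (m + 1) i j := by
    intro m
    have : pow Q (m + 1) i j = mul Q (pow Q m) i j := rfl
    rw [this, mul_apply_eq_sum hQ (maxDeg_pow_neg hQ m) i j]
    refine (Finset.sum_subset (Finset.Icc_subset_Icc (by omega) le_rfl) ?_).symm
    intro k hk hk'
    simp only [Finset.mem_Icc] at hk hk'
    rw [pow_neg_apply_eq_zero hQ (by omega), mul_zero]
  have e4 : mul Q (geomSeries Q) i j = ∑ m ∈ Finset.range n, (-1 : ℂ) ^ m * pow Q (m+1) i j := by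
    rw [e1, Finset.sum_congr rfl e2, Finset.sum_comm]
    refine Finset.sum_congr rfl fun m _ => ?_
    rw [← Finset.mul_sum, e3]
  have e5 : geomSeries Q i j = ∑ m ∈ Finset.range n, (-1 : ℂ) ^ (m + 1) * pow Q (m + 1) i j
      + (-1 : ℂ) ^ 0 * pow Q 0 i j := by
    rw [geomSeries_eq_sum hQ (n := n + 1) (by omega), Finset.sum_range_succ']
  rw [e4, e5, add_right_comm, ← Finset.sum_add_distrib]
  have : ∀ m ∈ Finset.range n,
      (-1 : ℂ) ^ (m + 1) * pow Q (m + 1) i j + (-1 : ℂ) ^ m * pow Q (m + 1) i j = 0 :=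
    fun m _ => by ring
  rw [Finset.sum_congr rfl this, Finset.sum_const_zero, zero_add]
  show (1 : ℂ) * one i j = one i j
  rw [one_mul]

lemma geom_right {Q : Mat} (hQ : MaxDeg (-1) Q) (i j : ℤ) :
    geomSeries Q i j + mul (geomSeries Q) Q i j = one i j := by
  have hG := maxDeg_geomSeries hQ
  set n := (i - j).toNat + 1 with hn
  have e1 : mul (geomSeries Q) Q i j
      = ∑ k ∈ Finset.Icc (j - (-1)) (i + 0), geomSeries Q i k * Q k j :=
    mul_apply_eq_sum hG hQ i j
  have e2 : ∀ k ∈ Finset.Icc (j - (-1)) (i + 0),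
      geomSeries Q i k * Q k j = ∑ m ∈ Finset.range n, (-1 : ℂ) ^ m * (pow Q m i k * Q k j) := by
    intro k hk
    rw [Finset.mem_Icc] at hk
    rw [geomSeries_eq_sum hQ (n := n) (by omega), Finset.sum_mul]
    exact Finset.sum_congr rfl fun m _ => by ring
  have e3 : ∀ m : ℕ, ∑ k ∈ Finset.Icc (j - (-1)) (i + 0), pow Q m i k * Q k j
      = pow Q (m + 1) i j := by
    intro m
    rw [pow_succ'' hQ m, mul_apply_eq_sum (maxDeg_pow_neg hQ m) hQ i j]
    refine (Finset.sum_subset (Finset.Icc_subset_Icc le_rfl (by omega)) ?_).symm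
    intro k hk hk'
    simp only [Finset.mem_Icc] at hk hk'
    rw [pow_neg_apply_eq_zero hQ (by omega), zero_mul]
  have e4 : mul (geomSeries Q) Q i j = ∑ m ∈ Finset.range n, (-1 : ℂ) ^ m * pow Q (m+1) i j := by
    rw [e1, Finset.sum_congr rfl e2, Finset.sum_comm]
    refine Finset.sum_congr rfl fun m _ => ?_
    rw [← Finset.mul_sum, e3]
  have e5 : geomSeries Q i j = ∑ m ∈ Finset.range n, (-1 : ℂ) ^ (m + 1) * pow Q (m + 1) i j
      + (-1 : ℂ) ^ 0 * pow Q 0 i j := by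
    rw [geomSeries_eq_sum hQ (n := n + 1) (by omega), Finset.sum_range_succ']
  rw [e4, e5, add_right_comm, ← Finset.sum_add_distrib]
  have : ∀ m ∈ Finset.range n,
      (-1 : ℂ) ^ (m + 1) * pow Q (m + 1) i j + (-1 : ℂ) ^ m * pow Q (m + 1) i j = 0 :=
    fun m _ => by ring
  rw [Finset.sum_congr rfl this, Finset.sum_const_zero, zero_add]
  show (1 : ℂ) * one i j = one i j
  rw [one_mul]

end Geom

section TodaBasic
variable (φ y : ℤ → ℂ)

lemma maxDeg_todaM : MaxDeg 1 (todaM φ y) := by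
  intro i j h
  unfold todaM at h
  split_ifs at h with h1 h2 h3
  · omega
  · omega
  · omega
  · exact absurd rfl h

lemma mul_todaM_apply (X : Mat) (i j : ℤ) :
    mul X (todaM φ y) i j = X i (j - 1) * y (j - 1) + X i j * φ j + X i (j + 1) * y j := by
  have hd : ((j - 1 : ℤ)) ∉ ({j, j + 1} : Finset ℤ) := by simp; omega
  have hd2 : (j : ℤ) ∉ ({j + 1} : Finset ℤ) := by simp
  have e : mul X (todaM φ y) i j
      = ∑ k ∈ ({j - 1, j, j + 1} : Finset ℤ), X i k * todaM φ y k j := by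
    refine tsum_eq_sum fun k hk => ?_
    simp only [Finset.mem_insert, Finset.mem_singleton, not_or] at hk
    obtain ⟨h1, h2, h3⟩ := hk
    have hz : todaM φ y k j = 0 := by
      unfold todaM
      rw [if_neg (by omega), if_neg (by omega), if_neg (by omega)]
    rw [hz, mul_zero]
  rw [e, Finset.sum_insert hd, Finset.sum_insert hd2, Finset.sum_singleton]
  have v1 : todaM φ y (j - 1) j = y (j - 1) := by
    unfold todaM; rw [if_neg (by omega), if_pos (by omega)]
  have v2 : todaM φ y j j = φ j := by unfold todaM; rw [if_pos rfl]
  have v3 : todaM φ y (j + 1) j = y j := by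
    unfold todaM; rw [if_neg (by omega), if_neg (by omega), if_pos rfl]
  rw [v1, v2, v3]; ring

lemma todaM_mul_apply (X : Mat) (i j : ℤ) :
    mul (todaM φ y) X i j = y (i - 1) * X (i - 1) j + φ i * X i j + y i * X (i + 1) j := by
  have hd : ((i - 1 : ℤ)) ∉ ({i, i + 1} : Finset ℤ) := by simp; omega
  have hd2 : (i : ℤ) ∉ ({i + 1} : Finset ℤ) := by simp
  have e : mul (todaM φ y) X i j
      = ∑ k ∈ ({i - 1, i, i + 1} : Finset ℤ), todaM φ y i k * X k j := by
    refine tsum_eq_sum fun k hk => ?_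
    simp only [Finset.mem_insert, Finset.mem_singleton, not_or] at hk
    obtain ⟨h1, h2, h3⟩ := hk
    have hz : todaM φ y i k = 0 := by
      unfold todaM
      rw [if_neg (by omega), if_neg (by omega), if_neg (by omega)]
    rw [hz, zero_mul]
  rw [e, Finset.sum_insert hd, Finset.sum_insert hd2, Finset.sum_singleton]
  have v1 : todaM φ y i (i - 1) = y (i - 1) := by
    unfold todaM; rw [if_neg (by omega), if_neg (by omega), if_pos (by omega)]
  have v2 : todaM φ y i i = φ i := by unfold todaM; rw [if_pos rfl]
  have v3 : todaM φ y i (i + 1) = y i := by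
    unfold todaM; rw [if_neg (by omega), if_pos rfl]
  rw [v1, v2, v3]; ring

lemma comm_sub (X Y : Mat) :
    comm (X - Y) (todaM φ y) = comm X (todaM φ y) - comm Y (todaM φ y) := by
  funext i j
  simp only [comm, Pi.sub_apply]
  rw [mul_todaM_apply, todaM_mul_apply, mul_todaM_apply, todaM_mul_apply,
    mul_todaM_apply, todaM_mul_apply]
  simp only [Pi.sub_apply]
  ring

lemma comm_smul (c : ℂ) (X : Mat) :
    comm (c • X) (todaM φ y) = c • comm X (todaM φ y) := by
  funext i j
  simp only [comm, Pi.sub_apply, Pi.smul_apply, smul_eq_mul]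
  rw [mul_todaM_apply, todaM_mul_apply, mul_todaM_apply, todaM_mul_apply]
  simp only [Pi.smul_apply, smul_eq_mul]
  ring

lemma comm_recursion {d : ℤ} {X : Mat} (hX : MaxDeg d X)
    (hc : comm X (todaM φ y) = 0) (i : ℤ) :
    X i (i + d) * y (i + d) = y i * X (i + 1) (i + 1 + d) := by
  have h := congrFun (congrFun hc i) (i + d + 1)
  simp only [comm, Pi.sub_apply, Pi.zero_apply] at h
  rw [mul_todaM_apply, todaM_mul_apply] at h
  have z1 : X i (i + d + 1) = 0 := by
    by_contra h0; have := hX _ _ h0; omega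
  have z2 : X i (i + d + 1 + 1) = 0 := by
    by_contra h0; have := hX _ _ h0; omega
  have z3 : X (i - 1) (i + d + 1) = 0 := by
    by_contra h0; have := hX _ _ h0; omega
  have e : i + d + 1 - 1 = i + d := by ring
  rw [e, z1, z2, z3] at h
  have e2 : i + 1 + d = i + d + 1 := by ring
  rw [e2]
  linear_combination h

lemma recursion_zero {d : ℤ} (hy0 : ∀ i, y i ≠ 0) (g : ℤ → ℂ)
    (hrec : ∀ i, g i * y (i + d) = y i * g (i + 1)) (h0 : g 0 = 0) : ∀ i, g i = 0 := by
  intro i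
  induction i using Int.induction_on with
  | zero => exact h0
  | succ n ih =>
      have h := hrec n
      rw [ih, zero_mul] at h
      exact ((mul_eq_zero.mp h.symm).resolve_left (hy0 n))
  | pred n ih =>
      have h := hrec (-(n : ℤ) - 1)
      have e : (-(n : ℤ) - 1) + 1 = -(n : ℤ) := by ring
      rw [e, ih, mul_zero] at h
      exact (mul_eq_zero.mp h).resolve_right (hy0 _)

lemma top_proportional {d : ℤ} (hy0 : ∀ i, y i ≠ 0) {X P : Mat}
    (hX : MaxDeg d X) (hcX : comm X (todaM φ y) = 0)
    (hP : MaxDeg d P) (hcP : comm P (todaM φ y) = 0)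
    (hP0 : ∀ i, P i (i + d) ≠ 0) (i : ℤ) :
    X i (i + d) = (X 0 d / P 0 d) * P i (i + d) := by
  set c := X 0 d / P 0 d with hcdef
  have key : ∀ i : ℤ, X i (i + d) - c * P i (i + d) = 0 := by
    refine recursion_zero (d := d) y hy0 (fun i => X i (i + d) - c * P i (i + d)) ?_ ?_
    · intro i
      have h1 := comm_recursion φ y hX hcX i
      have h2 := comm_recursion φ y hP hcP i
      ring_nf
      ring_nf at h1 h2
      linear_combination h1 - c * h2
    · have hP00 : P 0 (0 + d) ≠ 0 := hP0 0
      rw [zero_add] at hP00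
      show X 0 (0 + d) - c * P 0 (0 + d) = 0
      rw [zero_add, hcdef, div_mul_cancel₀ _ hP00, sub_self]
  exact sub_eq_zero.mp (key i)

end TodaBasic

section Inv
variable (φ y : ℤ → ℂ)

lemma topInv_todaM_apply (i j : ℤ) :
    topInv 1 (todaM φ y) i j = if j = i - 1 then (y (i - 1))⁻¹ else 0 := by
  unfold topInv
  by_cases h : j = i - 1
  · rw [if_pos h, if_pos h]
    subst h
    have : todaM φ y (i - 1) (i - 1 + 1) = y (i - 1) := by
      unfold todaM; rw [if_neg (by omega), if_pos rfl]
    rw [this]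
  · rw [if_neg h, if_neg h]

lemma topPart_todaM_apply (i j : ℤ) :
    topPart 1 (todaM φ y) i j = if j = i + 1 then y i else 0 := by
  unfold topPart
  by_cases h : j = i + 1
  · rw [if_pos h, if_pos h]
    subst h
    unfold todaM; rw [if_neg (by omega), if_pos rfl]
  · rw [if_neg h, if_neg h]

lemma maxDeg_topInv : MaxDeg (-1) (topInv 1 (todaM φ y)) := by
  intro i j h
  rw [topInv_todaM_apply] at h
  split_ifs at h with h1
  · omega
  · exact absurd rfl h

lemma maxDeg_topM : MaxDeg 1 (topPart 1 (todaM φ y)) := by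
  intro i j h
  rw [topPart_todaM_apply] at h
  split_ifs at h with h1
  · omega
  · exact absurd rfl h

lemma maxDeg_Mt : MaxDeg 0 (todaM φ y - topPart 1 (todaM φ y)) := by
  intro i j h
  by_contra hc
  push_neg at hc
  apply h
  simp only [Pi.sub_apply]
  rw [topPart_todaM_apply]
  by_cases h1 : j = i + 1
  · rw [if_pos h1]
    subst h1
    have : todaM φ y i (i + 1) = y i := by
      unfold todaM; rw [if_neg (by omega), if_pos rfl]
    rw [this, sub_self]
  · rw [if_neg h1]
    have : todaM φ y i j = 0 := by
      unfold todaM; rw [if_neg (by omega), if_neg h1, if_neg (by omega)]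
    rw [this, sub_zero]

lemma topM_mul_topInv (hy0 : ∀ i, y i ≠ 0) :
    mul (topPart 1 (todaM φ y)) (topInv 1 (todaM φ y)) = one := by
  funext i j
  show (∑' k : ℤ, topPart 1 (todaM φ y) i k * topInv 1 (todaM φ y) k j) = one i j
  rw [tsum_eq_single (i + 1) ?_]
  · rw [topPart_todaM_apply, topInv_todaM_apply, if_pos rfl]
    unfold one
    by_cases h : i = j
    · rw [if_pos h, if_pos (by omega)]
      have e : i + 1 - 1 = i := by ring
      rw [e, mul_inv_cancel₀ (hy0 i)]
    · rw [if_neg h, if_neg (by omega), mul_zero]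
  · intro k hk
    rw [topPart_todaM_apply, if_neg hk, zero_mul]

lemma topInv_mul_topM (hy0 : ∀ i, y i ≠ 0) :
    mul (topInv 1 (todaM φ y)) (topPart 1 (todaM φ y)) = one := by
  funext i j
  show (∑' k : ℤ, topInv 1 (todaM φ y) i k * topPart 1 (todaM φ y) k j) = one i j
  rw [tsum_eq_single (i - 1) ?_]
  · rw [topPart_todaM_apply, topInv_todaM_apply, if_pos rfl]
    unfold one
    by_cases h : i = j
    · rw [if_pos h, if_pos (by omega)]
      rw [inv_mul_cancel₀ (hy0 (i - 1))]
    · rw [if_neg h, if_neg (by omega), mul_zero]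
  · intro k hk
    rw [topInv_todaM_apply, if_neg hk, zero_mul]

lemma maxDeg_Q :
    MaxDeg (-1) (mul (todaM φ y - topPart 1 (todaM φ y)) (topInv 1 (todaM φ y))) :=
  maxDeg_of_le (maxDeg_mul (maxDeg_Mt φ y) (maxDeg_topInv φ y)) (by norm_num)

lemma maxDeg_Minv : MaxDeg (-1) (geomInv 1 (todaM φ y)) := by
  unfold geomInv
  exact maxDeg_of_le
    (maxDeg_mul (maxDeg_topInv φ y) (maxDeg_geomSeries (maxDeg_Q φ y))) (by norm_num)

lemma M_mul_Minv (hy0 : ∀ i, y i ≠ 0) :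
    mul (todaM φ y) (geomInv 1 (todaM φ y)) = one := by
  have hM : MaxDeg 1 (todaM φ y) := maxDeg_todaM φ y
  have hT : MaxDeg (-1) (topInv 1 (todaM φ y)) := maxDeg_topInv φ y
  have htM : MaxDeg 1 (topPart 1 (todaM φ y)) := maxDeg_topM φ y
  have hMt : MaxDeg 0 (todaM φ y - topPart 1 (todaM φ y)) := maxDeg_Mt φ y
  have hQ := maxDeg_Q φ y
  have hG := maxDeg_geomSeries hQ
  show mul (todaM φ y) (mul (topInv 1 (todaM φ y)) (geomSeries _)) = one
  rw [← mul_assoc' hM hT hG]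
  have e1 : mul (todaM φ y - topPart 1 (todaM φ y)) (topInv 1 (todaM φ y))
      = mul (todaM φ y) (topInv 1 (todaM φ y))
        - mul (topPart 1 (todaM φ y)) (topInv 1 (todaM φ y)) :=
    mul_sub_left hM htM hT
  have e2 : mul (todaM φ y) (topInv 1 (todaM φ y))
      = one + mul (todaM φ y - topPart 1 (todaM φ y)) (topInv 1 (todaM φ y)) := by
    rw [e1, topM_mul_topInv φ y hy0]; abel
  rw [e2, mul_add_left maxDeg_one (maxDeg_of_le hQ (by norm_num)) hG, one_mul']
  funext i j
  simp only [Pi.add_apply]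
  exact geom_left hQ i j

lemma Minv_mul_M (hy0 : ∀ i, y i ≠ 0) :
    mul (geomInv 1 (todaM φ y)) (todaM φ y) = one := by
  have hM := maxDeg_todaM φ y
  have hT := maxDeg_topInv φ y
  have htM := maxDeg_topM φ y
  have hMt := maxDeg_Mt φ y
  have hQ := maxDeg_Q φ y
  have hio := topInv_mul_topM φ y hy0
  set M := todaM φ y
  set T := topInv 1 M
  set tM := topPart 1 M
  set Q := mul (M - tM) T with hQdef
  set G := geomSeries Q with hGdef
  have hG : MaxDeg 0 G := maxDeg_geomSeries hQ
  show mul (mul T G) M = one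
  rw [mul_assoc' hT hG hM]
  have f1 : mul Q tM = M - tM := by
    rw [hQdef, mul_assoc' hMt hT htM, hio, mul_one']
  have f2 : mul G (M - tM) = mul G M - mul G tM := mul_sub_right hG hM htM
  have f3 : mul G (M - tM) = mul (mul G Q) tM := by
    conv_lhs => rw [← f1]
    rw [mul_assoc' hG hQ htM]
  have f4 : G + mul G Q = one := by
    funext i j; simp only [Pi.add_apply]; exact geom_right hQ i j
  have f5 : mul G M = tM := by
    have h6 := mul_add_left hG (maxDeg_of_le (maxDeg_mul hG hQ) (by norm_num)) htM
      (X := G) (Y := mul G Q) (Z := tM)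
    rw [f4, one_mul'] at h6
    have h7 : mul G M - mul G tM = mul (mul G Q) tM := by rw [← f2, f3]
    rw [h6, ← h7]
    abel
  rw [f5]
  exact hio

lemma geomSeries_diag {Q : Mat} (k : ℤ) : geomSeries Q k k = 1 := by
  unfold geomSeries
  rw [sub_self]
  show ∑ m ∈ Finset.range ((0 : ℤ).toNat + 1), (-1 : ℂ) ^ m * pow Q m k k = 1
  rw [Int.toNat_zero, Finset.sum_range_one]
  show (-1 : ℂ) ^ 0 * one k k = 1
  unfold one
  rw [if_pos rfl, pow_zero, one_mul]

lemma Minv_subdiag (i : ℤ) : geomInv 1 (todaM φ y) i (i - 1) = (y (i - 1))⁻¹ := by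
  show (∑' k : ℤ, topInv 1 (todaM φ y) i k * geomSeries _ k (i - 1)) = (y (i - 1))⁻¹
  rw [tsum_eq_single (i - 1) ?_]
  · rw [topInv_todaM_apply, if_pos rfl, geomSeries_diag, mul_one]
  · intro k hk
    rw [topInv_todaM_apply, if_neg hk, zero_mul]

end Inv

section IntPow
variable (φ y : ℤ → ℂ)

lemma maxDeg_pow_M (n : ℕ) : MaxDeg (n : ℤ) (pow (todaM φ y) n) :=
  maxDeg_of_le (maxDeg_pow (maxDeg_todaM φ y) n) (by rw [mul_one])

lemma maxDeg_pow_Minv (n : ℕ) : MaxDeg (-(n : ℤ)) (pow (geomInv 1 (todaM φ y)) n) :=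
  maxDeg_of_le (maxDeg_pow (maxDeg_Minv φ y) n) (by rw [mul_neg_one])

lemma maxDeg_intPow (m : ℤ) : MaxDeg m (intPow (todaM φ y) m) := by
  unfold intPow
  split_ifs with h
  · exact maxDeg_of_le (maxDeg_pow_M φ y m.toNat) (by omega)
  · exact maxDeg_of_le (maxDeg_pow_Minv φ y (-m).toNat) (by omega)

lemma mulcomm_pow_M (n : ℕ) :
    mul (pow (todaM φ y) n) (todaM φ y) = mul (todaM φ y) (pow (todaM φ y) n) := by
  induction n with
  | zero => show mul one (todaM φ y) = mul (todaM φ y) one; rw [one_mul', mul_one']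
  | succ n ih =>
      show mul (mul (todaM φ y) (pow (todaM φ y) n)) (todaM φ y)
        = mul (todaM φ y) (mul (todaM φ y) (pow (todaM φ y) n))
      rw [mul_assoc' (maxDeg_todaM φ y) (maxDeg_pow_M φ y n) (maxDeg_todaM φ y), ih]

lemma mulcomm_pow_Minv (hy0 : ∀ i, y i ≠ 0) (n : ℕ) :
    mul (pow (geomInv 1 (todaM φ y)) n) (todaM φ y)
      = mul (todaM φ y) (pow (geomInv 1 (todaM φ y)) n) := by
  induction n with
  | zero => show mul one (todaM φ y) = mul (todaM φ y) one; rw [one_mul', mul_one']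
  | succ n ih =>
      have hI := maxDeg_Minv φ y
      have hp := maxDeg_pow_Minv φ y n
      have hM := maxDeg_todaM φ y
      show mul (mul (geomInv 1 (todaM φ y)) (pow (geomInv 1 (todaM φ y)) n)) (todaM φ y)
        = mul (todaM φ y) (mul (geomInv 1 (todaM φ y)) (pow (geomInv 1 (todaM φ y)) n))
      rw [mul_assoc' hI hp hM, ih, ← mul_assoc' hI hM hp, Minv_mul_M φ y hy0, one_mul',
        ← mul_assoc' hM hI hp, M_mul_Minv φ y hy0, one_mul']

lemma comm_intPow (hy0 : ∀ i, y i ≠ 0) (m : ℤ) :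
    comm (intPow (todaM φ y) m) (todaM φ y) = 0 := by
  unfold comm intPow
  split_ifs with h
  · rw [mulcomm_pow_M φ y, sub_self]
  · rw [mulcomm_pow_Minv φ y hy0, sub_self]

lemma pow_M_top_ne (hy0 : ∀ i, y i ≠ 0) (n : ℕ) (i : ℤ) :
    pow (todaM φ y) n i (i + (n : ℤ)) ≠ 0 := by
  induction n generalizing i with
  | zero =>
      show one i (i + 0) ≠ 0
      rw [add_zero]
      unfold one
      rw [if_pos rfl]
      exact one_ne_zero
  | succ n ih =>
      have hp := maxDeg_pow_M φ y n
      show mul (todaM φ y) (pow (todaM φ y) n) i (i + ((n : ℤ) + 1)) ≠ 0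
      rw [todaM_mul_apply]
      have z1 : pow (todaM φ y) n (i - 1) (i + ((n : ℤ) + 1)) = 0 := by
        by_contra h0; have := hp _ _ h0; omega
      have z2 : pow (todaM φ y) n i (i + ((n : ℤ) + 1)) = 0 := by
        by_contra h0; have := hp _ _ h0; omega
      rw [z1, z2, mul_zero, mul_zero, zero_add, zero_add]
      have e : i + ((n : ℤ) + 1) = (i + 1) + (n : ℤ) := by ring
      rw [e]
      exact mul_ne_zero (hy0 i) (ih (i + 1))

lemma pow_Minv_top_ne (hy0 : ∀ i, y i ≠ 0) (n : ℕ) (i : ℤ) :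
    pow (geomInv 1 (todaM φ y)) n i (i - (n : ℤ)) ≠ 0 := by
  induction n generalizing i with
  | zero =>
      show one i (i - 0) ≠ 0
      rw [sub_zero]
      unfold one
      rw [if_pos rfl]
      exact one_ne_zero
  | succ n ih =>
      have hI := maxDeg_Minv φ y
      have hp := maxDeg_pow_Minv φ y n
      show mul (geomInv 1 (todaM φ y)) (pow (geomInv 1 (todaM φ y)) n) i (i - ((n : ℤ) + 1)) ≠ 0
      rw [mul_apply_eq_sum hI hp,
        show i - ((n : ℤ) + 1) - -(n : ℤ) = i - 1 by ring,
        show i + (-1 : ℤ) = i - 1 by ring, Finset.Icc_self, Finset.sum_singleton]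
      rw [show i - ((n : ℤ) + 1) = (i - 1) - (n : ℤ) by ring]
      exact mul_ne_zero (by rw [Minv_subdiag]; exact inv_ne_zero (hy0 (i - 1))) (ih (i - 1))

lemma intPow_top_ne (hy0 : ∀ i, y i ≠ 0) (m i : ℤ) :
    intPow (todaM φ y) m i (i + m) ≠ 0 := by
  unfold intPow
  split_ifs with h
  · rw [show i + m = i + (m.toNat : ℤ) by omega]
    exact pow_M_top_ne φ y hy0 m.toNat i
  · rw [show i + m = i - (((-m).toNat : ℤ)) by omega]
    exact pow_Minv_top_ne φ y hy0 (-m).toNat i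

lemma step (hy0 : ∀ i, y i ≠ 0) {d : ℤ} {Y : Mat} (hY : MaxDeg d Y)
    (hc : comm Y (todaM φ y) = 0) :
    MaxDeg (d - 1) (Y - (Y 0 d / intPow (todaM φ y) d 0 d) • intPow (todaM φ y) d) ∧
    comm (Y - (Y 0 d / intPow (todaM φ y) d 0 d) • intPow (todaM φ y) d) (todaM φ y) = 0 := by
  have hP : MaxDeg d (intPow (todaM φ y) d) := maxDeg_intPow φ y d
  have hcP : comm (intPow (todaM φ y) d) (todaM φ y) = 0 := comm_intPow φ y hy0 d
  have hP0 : ∀ i, intPow (todaM φ y) d i (i + d) ≠ 0 := intPow_top_ne φ y hy0 d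
  have htop := top_proportional φ y hy0 hY hc hP hcP hP0
  constructor
  · intro i j h
    by_contra hcon
    push_neg at hcon
    apply h
    simp only [Pi.sub_apply, Pi.smul_apply, smul_eq_mul]
    rcases lt_or_ge d (j - i) with hgt | hle
    · have z1 : Y i j = 0 := by by_contra h0; have := hY _ _ h0; omega
      have z2 : intPow (todaM φ y) d i j = 0 := by by_contra h0; have := hP _ _ h0; omega
      rw [z1, z2, mul_zero, sub_zero]
    · have hj : j = i + d := by omega
      subst hj
      rw [htop i, sub_self]
  · rw [comm_sub, comm_smul, hc, hcP, smul_zero, sub_self]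

end IntPow

/-- Residual matrices: `X` minus its leading Laurent terms in `M`. -/
noncomputable def resid (φ y : ℤ → ℂ) (k : ℤ) (X : Mat) : ℕ → Mat
  | 0 => X
  | n + 1 => resid φ y k X n -
      (resid φ y k X n 0 (k - n) / intPow (todaM φ y) (k - n) 0 (k - n)) •
        intPow (todaM φ y) (k - n)

/-- Laurent coefficients of `X` as a series in `M`. -/
noncomputable def cseq (φ y : ℤ → ℂ) (k : ℤ) (X : Mat) (n : ℕ) : ℂ :=
  resid φ y k X n 0 (k - n) / intPow (todaM φ y) (k - n) 0 (k - n)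

/-- a periodic matrix of maximal degree `k` commuting with the Toda
Lax matrix `M` is an (infinite) linear combination `Σ_{m ≤ k} λ_m M^m`, negative
powers taken via the inverse of `M` in the ring of matrices of finite maximal
degree. -/
theorem commutant_is_laurent_series_in_M
    (N : ℕ) (hN : 0 < N) (φ y : ℤ → ℂ)
    (hφ : ∀ i, φ (i + N) = φ i) (hy : ∀ i, y (i + N) = y i)
    (hy0 : ∀ i, y i ≠ 0)
    (k : ℤ) (X : Mat) (hXper : Periodic N X) (hXdeg : MaxDeg k X)
    (hcomm : comm X (todaM φ y) = 0) :
    ∃ lam : ℤ → ℂ, ∀ i j : ℤ,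
      X i j = ∑' m : {m : ℤ // m ≤ k}, lam m * intPow (todaM φ y) m i j := by
  classical
  refine ⟨fun m => if m ≤ k then cseq φ y k X (k - m).toNat else 0, ?_⟩
  intro i j
  have hinv : ∀ n : ℕ,
      MaxDeg (k - n) (resid φ y k X n) ∧ comm (resid φ y k X n) (todaM φ y) = 0 := by
    intro n
    induction n with
    | zero =>
        constructor
        · show MaxDeg (k - ((0 : ℕ) : ℤ)) X
          rw [Nat.cast_zero, sub_zero]
          exact hXdeg
        · exact hcomm
    | succ n ih =>
        obtain ⟨h1, h2⟩ := ih
        have hs := step φ y hy0 h1 h2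
        constructor
        · have h3 : (k - ((n + 1 : ℕ) : ℤ)) = (k - (n : ℕ)) - 1 := by push_cast; ring
          rw [h3]
          exact hs.1
        · exact hs.2
  have htel : ∀ n : ℕ, X i j = resid φ y k X n i j
      + ∑ s ∈ Finset.range n, cseq φ y k X s * intPow (todaM φ y) (k - s) i j := by
    intro n
    induction n with
    | zero => simp [resid]
    | succ n ih =>
        rw [Finset.sum_range_succ]
        have hstep : resid φ y k X (n + 1) i j
            = resid φ y k X n i j - cseq φ y k X n * intPow (todaM φ y) (k - n) i j := by
          show (resid φ y k X n -
            (resid φ y k X n 0 (k - n) / intPow (todaM φ y) (k - n) 0 (k - n)) •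
              intPow (todaM φ y) (k - n)) i j = _
          simp only [Pi.sub_apply, Pi.smul_apply, smul_eq_mul]
          rfl
        rw [hstep, ih]
        ring
  set n : ℕ := (k - (j - i)).toNat + 1 with hn
  have hR0 : resid φ y k X n i j = 0 := by
    by_contra h0
    have := (hinv n).1 _ _ h0
    omega
  have hXij : X i j
      = ∑ s ∈ Finset.range n, cseq φ y k X s * intPow (todaM φ y) (k - s) i j := by
    rw [htel n, hR0, zero_add]
  have hts : (∑' m : {m : ℤ // m ≤ k},
        (if (m : ℤ) ≤ k then cseq φ y k X (k - (m : ℤ)).toNat else 0)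
          * intPow (todaM φ y) (m : ℤ) i j)
      = ∑ m ∈ Finset.Icc (j - i) k,
          cseq φ y k X (k - m).toNat * intPow (todaM φ y) m i j := by
    rw [tsum_eq_sum (s := (Finset.Icc (j - i) k).subtype (· ≤ k)) ?_]
    · rw [Finset.sum_subtype_of_mem
        (fun m => (if m ≤ k then cseq φ y k X (k - m).toNat else 0) * intPow (todaM φ y) m i j)
        (fun x hx => (Finset.mem_Icc.mp hx).2)]
      exact Finset.sum_congr rfl fun m hm => by rw [if_pos (Finset.mem_Icc.mp hm).2]
    · intro b hb
      rw [Finset.mem_subtype, Finset.mem_Icc] at hb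
      have hb2 : (b : ℤ) < j - i := by
        have := b.2
        omega
      have hz : intPow (todaM φ y) (b : ℤ) i j = 0 := by
        by_contra h0
        have := maxDeg_intPow φ y b i j h0
        omega
      rw [hz, mul_zero]
  rw [hts, hXij]
  rcases le_or_gt (j - i) k with hle | hgt
  · have himg : Finset.Icc (j - i) k = (Finset.range n).image (fun s : ℕ => k - (s : ℤ)) := by
      ext m
      simp only [Finset.mem_Icc, Finset.mem_image, Finset.mem_range]
      constructor
      · rintro ⟨h1, h2⟩
        exact ⟨(k - m).toNat, by omega, by omega⟩
      · rintro ⟨s, hs, rfl⟩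
        omega
    rw [himg, Finset.sum_image (by intro a _ b _ h; have h' : k - (a : ℤ) = k - (b : ℤ) := h; omega)]
    refine Finset.sum_congr rfl fun s _ => ?_
    congr 1
    congr 1
    omega
  · have hIcc : Finset.Icc (j - i) k = ∅ := Finset.Icc_eq_empty (by omega)
    rw [hIcc, Finset.sum_empty]
    refine Finset.sum_eq_zero fun s _ => ?_
    have hz : intPow (todaM φ y) (k - (s : ℤ)) i j = 0 := by
      by_contra h0
      have := maxDeg_intPow φ y (k - (s : ℤ)) i j h0
      omega
    rw [hz, mul_zero]


end Toda
end

section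
/- Let M be an N-periodic infinite symmetric tridiagonal matrix with nonzero off-diagonal entries. If X is an N-periodic infinite antisymmetric matrix of maximal degree k commuting with M, then X = A(M)_+ − A(M)_− for some polynomial A of degree at most k, where A(M)_± denote the strictly upper and strictly lower triangular parts of A(M). -/
namespace Toda

lemma tsum_three (g : ℤ → ℂ) (a : ℤ)
    (h : ∀ l, l ≠ a - 1 → l ≠ a → l ≠ a + 1 → g l = 0) :
    ∑' l, g l = g (a - 1) + g a + g (a + 1) := by
  have hs : ∀ l ∉ ({a - 1, a, a + 1} : Finset ℤ), g l = 0 := by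
    intro l hl
    simp only [Finset.mem_insert, Finset.mem_singleton] at hl
    push_neg at hl
    exact h l hl.1 hl.2.1 hl.2.2
  rw [tsum_eq_sum hs]
  rw [Finset.sum_insert (by simp; omega), Finset.sum_insert (by simp),
    Finset.sum_singleton, add_assoc]

lemma todaM_vanish_col (φ y : ℤ → ℂ) {l j : ℤ} (h1 : l ≠ j - 1) (h2 : l ≠ j) (h3 : l ≠ j + 1) :
    todaM φ y l j = 0 := by
  unfold todaM
  rw [if_neg (by omega), if_neg (by omega), if_neg (by omega)]

lemma todaM_vanish_row (φ y : ℤ → ℂ) {i l : ℤ} (h1 : l ≠ i - 1) (h2 : l ≠ i) (h3 : l ≠ i + 1) :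
    todaM φ y i l = 0 := by
  unfold todaM
  rw [if_neg (by omega), if_neg (by omega), if_neg (by omega)]

lemma mul_todaM (φ y : ℤ → ℂ) (X : Mat) (i j : ℤ) :
    mul X (todaM φ y) i j
      = X i (j - 1) * y (j - 1) + X i j * φ j + X i (j + 1) * y j := by
  unfold mul
  rw [tsum_three _ j (by
    intro l h1 h2 h3
    rw [todaM_vanish_col φ y h1 h2 h3, mul_zero])]
  have e1 : todaM φ y (j - 1) j = y (j - 1) := by
    unfold todaM; rw [if_neg (by omega), if_pos (by omega)]
  have e2 : todaM φ y j j = φ j := by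
    unfold todaM; rw [if_pos rfl]
  have e3 : todaM φ y (j + 1) j = y j := by
    unfold todaM; rw [if_neg (by omega), if_neg (by omega), if_pos (by omega)]
  rw [e1, e2, e3]

lemma todaM_mul (φ y : ℤ → ℂ) (X : Mat) (i j : ℤ) :
    mul (todaM φ y) X i j
      = y (i - 1) * X (i - 1) j + φ i * X i j + y i * X (i + 1) j := by
  unfold mul
  rw [tsum_three _ i (by
    intro l h1 h2 h3
    rw [todaM_vanish_row φ y h1 h2 h3, zero_mul])]
  have e1 : todaM φ y i (i - 1) = y (i - 1) := by
    unfold todaM; rw [if_neg (by omega), if_neg (by omega), if_pos (by omega)]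
  have e2 : todaM φ y i i = φ i := by
    unfold todaM; rw [if_pos rfl]
  have e3 : todaM φ y i (i + 1) = y i := by
    unfold todaM; rw [if_neg (by omega), if_pos rfl]
  rw [e1, e2, e3]

lemma pow_succ_apply (φ y : ℤ → ℂ) (m : ℕ) (i j : ℤ) :
    pow (todaM φ y) (m + 1) i j
      = y (i - 1) * pow (todaM φ y) m (i - 1) j + φ i * pow (todaM φ y) m i j
        + y i * pow (todaM φ y) m (i + 1) j := by
  show mul (todaM φ y) (pow (todaM φ y) m) i j = _
  rw [todaM_mul]

lemma pow_maxdeg (φ y : ℤ → ℂ) : ∀ (m : ℕ) (i j : ℤ), i + m < j → pow (todaM φ y) m i j = 0 := by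
  intro m
  induction m with
  | zero =>
    intro i j h
    show one i j = 0
    unfold one
    rw [if_neg (by omega)]
  | succ m ih =>
    intro i j h
    rw [pow_succ_apply, ih (i-1) j (by push_cast at h ⊢; omega), ih i j (by push_cast at h ⊢; omega),
      ih (i+1) j (by push_cast at h ⊢; omega)]
    ring

lemma pow_top (φ y : ℤ → ℂ) : ∀ (m : ℕ) (i : ℤ),
    pow (todaM φ y) m i (i + m) = ∏ s ∈ Finset.range m, y (i + s) := by
  intro m
  induction m with
  | zero =>
    intro i
    show one i (i + 0) = _
    simp [one]
  | succ m ih =>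
    intro i
    have hc : ((m + 1 : ℕ) : ℤ) = (m : ℤ) + 1 := by push_cast; ring
    rw [hc, pow_succ_apply]
    rw [pow_maxdeg φ y m (i-1) (i + ((m:ℤ)+1)) (by push_cast; omega),
      pow_maxdeg φ y m i (i + ((m:ℤ)+1)) (by push_cast; omega)]
    have he : (i : ℤ) + ((m:ℤ)+1) = (i+1) + m := by push_cast; ring
    rw [he, ih (i+1)]
    rw [Finset.prod_range_succ']
    simp only [Nat.cast_zero, add_zero]
    rw [Finset.prod_congr rfl (fun s _ => by
      show y (i + 1 + s) = y (i + ((s:ℕ)+1:ℕ))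
      congr 1
      push_cast
      ring)]
    ring

lemma pow_comm_entry (φ y : ℤ → ℂ) : ∀ (m : ℕ) (i j : ℤ),
    mul (todaM φ y) (pow (todaM φ y) m) i j = mul (pow (todaM φ y) m) (todaM φ y) i j := by
  intro m
  induction m with
  | zero =>
    intro i j
    have hone : pow (todaM φ y) 0 = one := rfl
    rw [hone]
    unfold mul
    have h1 : ∑' l, todaM φ y i l * one l j = todaM φ y i j := by
      rw [tsum_eq_single j (by intro l hl; unfold one; rw [if_neg hl, mul_zero])]
      unfold one; rw [if_pos rfl, mul_one]
    have h2 : ∑' l, one i l * todaM φ y l j = todaM φ y i j := by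
      rw [tsum_eq_single i (by intro l hl; unfold one; rw [if_neg (Ne.symm hl), zero_mul])]
      unfold one; rw [if_pos rfl, one_mul]
    rw [h1, h2]
  | succ m ih =>
    intro i j
    have hP : ∀ a b : ℤ, pow (todaM φ y) (m + 1) a b = mul (todaM φ y) (pow (todaM φ y) m) a b :=
      fun a b => rfl
    rw [todaM_mul, mul_todaM]
    conv_lhs => rw [hP (i-1) j, hP i j, hP (i+1) j, ih (i-1) j, ih i j, ih (i+1) j,
      mul_todaM, mul_todaM, mul_todaM]
    conv_rhs => rw [hP i (j-1), hP i j, hP i (j+1), todaM_mul, todaM_mul, todaM_mul]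
    ring

lemma pow_symm (φ y : ℤ → ℂ) : ∀ (m : ℕ) (i j : ℤ),
    pow (todaM φ y) m i j = pow (todaM φ y) m j i := by
  intro m
  induction m with
  | zero =>
    intro i j
    show one i j = one j i
    unfold one
    by_cases h : i = j
    · rw [if_pos h, if_pos h.symm]
    · rw [if_neg h, if_neg (Ne.symm h)]
  | succ m ih =>
    intro i j
    have hP : ∀ a b : ℤ, pow (todaM φ y) (m + 1) a b = mul (todaM φ y) (pow (todaM φ y) m) a b :=
      fun a b => rfl
    rw [hP i j, hP j i, todaM_mul, pow_comm_entry φ y m j i, mul_todaM,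
      ih j (i-1), ih j i, ih j (i+1)]
    ring

lemma piProd_rec (y : ℤ → ℂ) (k : ℕ) (i : ℤ) :
    (∏ s ∈ Finset.range k, y (i + s)) * y (i + k)
      = y i * ∏ s ∈ Finset.range k, y (i + 1 + s) := by
  rw [← Finset.prod_range_succ (fun s => y (i + s)) k]
  rw [Finset.prod_range_succ']
  rw [Finset.prod_congr rfl (fun s _ => by
    show y (i + ((s:ℕ)+1:ℕ)) = y (i + 1 + s)
    congr 1
    push_cast
    ring)]
  simp only [Nat.cast_zero, add_zero]
  ring

lemma evalPoly_eq_range (A : Polynomial ℂ) (M' : Mat) (n : ℕ) (h : A.natDegree ≤ n) :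
    evalPoly A M' = ∑ m ∈ Finset.range (n + 1), A.coeff m • pow M' m := by
  unfold evalPoly
  apply Finset.sum_subset
  · exact Finset.range_subset_range.mpr (by omega)
  · intro m hm hnm
    have hlt : A.natDegree < m := by
      simp only [Finset.mem_range] at hm hnm
      omega
    rw [Polynomial.coeff_eq_zero_of_natDegree_lt hlt, zero_smul]

lemma main_lemma (φ y : ℤ → ℂ) (hy0 : ∀ i, y i ≠ 0) :
    ∀ (k : ℕ) (X : Mat), (∀ i j, X i j = -X j i) → MaxDeg (k : ℤ) X →
    (∀ i j : ℤ, i + 2 ≤ j →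
      X i (j-1) * y (j-1) + X i j * φ j + X i (j+1) * y j
        = y (i-1) * X (i-1) j + φ i * X i j + y i * X (i+1) j) →
    ∃ A : Polynomial ℂ, A.natDegree ≤ k ∧
      X = upper (evalPoly A (todaM φ y)) - lower (evalPoly A (todaM φ y)) := by
  intro k
  induction k with
  | zero =>
    intro X hasym hdeg _
    have hX0 : ∀ i j, X i j = 0 := by
      intro i j
      by_cases h : X i j = 0
      · exact h
      · have h1 : j - i ≤ 0 := by simpa using hdeg i j h
        have h2 : i - j ≤ 0 := by
          have := hdeg j i (by rw [hasym j i]; simpa using h)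
          simpa using this
        have hij : i = j := by omega
        subst hij
        linear_combination (hasym i i) / 2
    refine ⟨0, by simp, ?_⟩
    funext i j
    have hE : evalPoly (0 : Polynomial ℂ) (todaM φ y) = fun _ _ => (0:ℂ) := by
      funext a b
      simp [evalPoly]
    rw [hX0]
    simp [upper, lower, hE]
  | succ k ih =>
    intro X hasym hdeg hC
    have hz : ∀ i j : ℤ, (k:ℤ) + 1 < j - i → X i j = 0 := by
      intro i j h
      by_contra hne
      have := hdeg i j hne
      push_cast at this
      omega
    have hd_rec : ∀ i : ℤ, X i (i + ((k:ℤ)+1)) * y (i + ((k:ℤ)+1))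
        = y i * X (i+1) ((i+1) + ((k:ℤ)+1)) := by
      intro i
      have h := hC i (i + ((k:ℤ)+1) + 1) (by omega)
      rw [hz i (i + ((k:ℤ)+1) + 1) (by omega), hz i (i + ((k:ℤ)+1) + 1 + 1) (by omega),
        hz (i-1) (i + ((k:ℤ)+1) + 1) (by omega)] at h
      have e1 : i + ((k:ℤ)+1) + 1 - 1 = i + ((k:ℤ)+1) := by ring
      rw [e1] at h
      have e2 : i + ((k:ℤ)+1) + 1 = (i+1) + ((k:ℤ)+1) := by ring
      rw [e2] at h
      linear_combination h
    have hπrec : ∀ i : ℤ, (∏ s ∈ Finset.range (k+1), y (i + (s:ℤ))) * y (i + ((k:ℤ)+1))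
        = y i * ∏ s ∈ Finset.range (k+1), y ((i+1) + (s:ℤ)) := by
      intro i
      have h := piProd_rec y (k+1) i
      push_cast at h ⊢
      convert h using 3
    have key : ∀ i : ℤ, X i (i + ((k:ℤ)+1)) * (∏ s ∈ Finset.range (k+1), y ((0:ℤ) + (s:ℤ)))
        = X 0 (0 + ((k:ℤ)+1)) * (∏ s ∈ Finset.range (k+1), y (i + (s:ℤ))) := by
      intro i
      induction i using Int.induction_on with
      | zero => rfl
      | succ n ihn =>
        apply mul_left_cancel₀ (hy0 (n:ℤ))
        calc y (n:ℤ) * (X ((n:ℤ)+1) (((n:ℤ)+1) + ((k:ℤ)+1)) * ∏ s ∈ Finset.range (k+1), y ((0:ℤ) + (s:ℤ)))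
            = (y (n:ℤ) * X ((n:ℤ)+1) (((n:ℤ)+1) + ((k:ℤ)+1))) * ∏ s ∈ Finset.range (k+1), y ((0:ℤ) + (s:ℤ)) := by ring
          _ = (X (n:ℤ) ((n:ℤ) + ((k:ℤ)+1)) * y ((n:ℤ) + ((k:ℤ)+1))) * ∏ s ∈ Finset.range (k+1), y ((0:ℤ) + (s:ℤ)) := by
              rw [hd_rec (n:ℤ)]
          _ = (X (n:ℤ) ((n:ℤ) + ((k:ℤ)+1)) * ∏ s ∈ Finset.range (k+1), y ((0:ℤ) + (s:ℤ))) * y ((n:ℤ) + ((k:ℤ)+1)) := by ring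
          _ = (X 0 (0 + ((k:ℤ)+1)) * ∏ s ∈ Finset.range (k+1), y ((n:ℤ) + (s:ℤ))) * y ((n:ℤ) + ((k:ℤ)+1)) := by rw [ihn]
          _ = X 0 (0 + ((k:ℤ)+1)) * ((∏ s ∈ Finset.range (k+1), y ((n:ℤ) + (s:ℤ))) * y ((n:ℤ) + ((k:ℤ)+1))) := by ring
          _ = X 0 (0 + ((k:ℤ)+1)) * (y (n:ℤ) * ∏ s ∈ Finset.range (k+1), y (((n:ℤ)+1) + (s:ℤ))) := by rw [hπrec (n:ℤ)]
          _ = y (n:ℤ) * (X 0 (0 + ((k:ℤ)+1)) * ∏ s ∈ Finset.range (k+1), y (((n:ℤ)+1) + (s:ℤ))) := by ring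
      | pred n ihn =>
        have hdr := hd_rec (-(n:ℤ)-1)
        have e : (-(n:ℤ)-1) + 1 = -(n:ℤ) := by ring
        rw [e] at hdr
        have hpr := hπrec (-(n:ℤ)-1)
        rw [e] at hpr
        apply mul_right_cancel₀ (hy0 ((-(n:ℤ)-1) + ((k:ℤ)+1)))
        calc (X (-(n:ℤ)-1) ((-(n:ℤ)-1) + ((k:ℤ)+1)) * ∏ s ∈ Finset.range (k+1), y ((0:ℤ) + (s:ℤ))) * y ((-(n:ℤ)-1) + ((k:ℤ)+1))
            = (X (-(n:ℤ)-1) ((-(n:ℤ)-1) + ((k:ℤ)+1)) * y ((-(n:ℤ)-1) + ((k:ℤ)+1))) * ∏ s ∈ Finset.range (k+1), y ((0:ℤ) + (s:ℤ)) := by ring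
          _ = (y (-(n:ℤ)-1) * X (-(n:ℤ)) ((-(n:ℤ)) + ((k:ℤ)+1))) * ∏ s ∈ Finset.range (k+1), y ((0:ℤ) + (s:ℤ)) := by rw [hdr]
          _ = y (-(n:ℤ)-1) * (X (-(n:ℤ)) ((-(n:ℤ)) + ((k:ℤ)+1)) * ∏ s ∈ Finset.range (k+1), y ((0:ℤ) + (s:ℤ))) := by ring
          _ = y (-(n:ℤ)-1) * (X 0 (0 + ((k:ℤ)+1)) * ∏ s ∈ Finset.range (k+1), y ((-(n:ℤ)) + (s:ℤ))) := by rw [ihn]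
          _ = X 0 (0 + ((k:ℤ)+1)) * (y (-(n:ℤ)-1) * ∏ s ∈ Finset.range (k+1), y ((-(n:ℤ)) + (s:ℤ))) := by ring
          _ = X 0 (0 + ((k:ℤ)+1)) * ((∏ s ∈ Finset.range (k+1), y ((-(n:ℤ)-1) + (s:ℤ))) * y ((-(n:ℤ)-1) + ((k:ℤ)+1))) := by rw [hpr]
          _ = (X 0 (0 + ((k:ℤ)+1)) * ∏ s ∈ Finset.range (k+1), y ((-(n:ℤ)-1) + (s:ℤ))) * y ((-(n:ℤ)-1) + ((k:ℤ)+1)) := by ring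
    obtain ⟨c, hc⟩ : ∃ c : ℂ, ∀ i : ℤ, X i (i + ((k:ℤ)+1))
        = c * ∏ s ∈ Finset.range (k+1), y (i + (s:ℤ)) := by
      refine ⟨X 0 (0 + ((k:ℤ)+1)) / (∏ s ∈ Finset.range (k+1), y ((0:ℤ) + (s:ℤ))), ?_⟩
      intro i
      have h0 : (∏ s ∈ Finset.range (k+1), y ((0:ℤ) + (s:ℤ))) ≠ 0 :=
        Finset.prod_ne_zero_iff.mpr fun s _ => hy0 _
      rw [div_mul_eq_mul_div, eq_div_iff h0]
      linear_combination key i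
    set X' : Mat := fun i j => X i j
        - c * ((if i < j then pow (todaM φ y) (k+1) i j else 0)
             - (if j < i then pow (todaM φ y) (k+1) i j else 0)) with hX'def
    have htop : ∀ i : ℤ, pow (todaM φ y) (k+1) i (i + ((k:ℤ)+1))
        = ∏ s ∈ Finset.range (k+1), y (i + (s:ℤ)) := by
      intro i
      have h := pow_top φ y (k+1) i
      push_cast at h ⊢
      exact h
    have hX'up : ∀ a b : ℤ, a < b →
        X' a b = X a b - c * pow (todaM φ y) (k+1) a b := by
      intro a b hab
      rw [hX'def]
      simp only
      rw [if_pos hab, if_neg (lt_asymm hab)]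
      ring
    have hX'lo : ∀ a b : ℤ, b < a →
        X' a b = X a b + c * pow (todaM φ y) (k+1) a b := by
      intro a b hab
      rw [hX'def]
      simp only
      rw [if_neg (lt_asymm hab), if_pos hab]
      ring
    have hX'di : ∀ a : ℤ, X' a a = X a a := by
      intro a
      rw [hX'def]
      simp
    have hasym' : ∀ i j, X' i j = -X' j i := by
      intro i j
      rcases lt_trichotomy i j with h | h | h
      · rw [hX'up i j h, hX'lo j i h, hasym i j, pow_symm φ y (k+1) j i]
        ring
      · subst h
        rw [hX'di i]
        exact hasym i i
      · rw [hX'lo i j h, hX'up j i h, hasym i j, pow_symm φ y (k+1) j i]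
        ring
    have hdeg' : MaxDeg (k:ℤ) X' := by
      intro i j hne
      by_contra hgt
      push_neg at hgt
      apply hne
      by_cases hcase : j - i = (k:ℤ)+1
      · have hij : i < j := by omega
        have hj : j = i + ((k:ℤ)+1) := by omega
        rw [hX'up i j hij, hj, htop i, hc i]
        ring
      · have h2 : (k:ℤ)+1 < j - i := by omega
        have hij : i < j := by omega
        rw [hX'up i j hij, hz i j h2, pow_maxdeg φ y (k+1) i j (by push_cast; omega)]
        ring
    have hC' : ∀ i j : ℤ, i + 2 ≤ j →
        X' i (j-1) * y (j-1) + X' i j * φ j + X' i (j+1) * y j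
          = y (i-1) * X' (i-1) j + φ i * X' i j + y i * X' (i+1) j := by
      intro i j hij
      rw [hX'up i (j-1) (by omega), hX'up i j (by omega), hX'up i (j+1) (by omega),
        hX'up (i-1) j (by omega), hX'up (i+1) j (by omega)]
      have h1 := pow_comm_entry φ y (k+1) i j
      rw [mul_todaM, todaM_mul] at h1
      linear_combination hC i j hij + c * h1
    obtain ⟨A', hA'deg, hA'eq⟩ := ih X' hasym' hdeg' hC'
    refine ⟨A' + Polynomial.C c * Polynomial.X ^ (k+1), ?_, ?_⟩
    · apply le_trans (Polynomial.natDegree_add_le _ _)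
      apply max_le (le_trans hA'deg (by omega))
      exact le_trans (Polynomial.natDegree_C_mul_le c _)
        (le_of_eq (Polynomial.natDegree_X_pow _))
    · have hdegA : (A' + Polynomial.C c * Polynomial.X ^ (k+1)).natDegree ≤ k + 1 := by
        apply le_trans (Polynomial.natDegree_add_le _ _)
        apply max_le (le_trans hA'deg (by omega))
        exact le_trans (Polynomial.natDegree_C_mul_le c _)
          (le_of_eq (Polynomial.natDegree_X_pow _))
      have hEval : ∀ a b : ℤ,
          evalPoly (A' + Polynomial.C c * Polynomial.X ^ (k+1)) (todaM φ y) a b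
            = evalPoly A' (todaM φ y) a b + c * pow (todaM φ y) (k+1) a b := by
        intro a b
        rw [evalPoly_eq_range _ _ (k+1) hdegA,
          evalPoly_eq_range A' _ (k+1) (le_trans hA'deg (by omega))]
        have hsplit : (∑ m ∈ Finset.range (k+1+1),
            (A' + Polynomial.C c * Polynomial.X ^ (k+1)).coeff m • pow (todaM φ y) m)
            = (∑ m ∈ Finset.range (k+1+1), A'.coeff m • pow (todaM φ y) m)
              + ∑ m ∈ Finset.range (k+1+1),
                  (Polynomial.C c * Polynomial.X ^ (k+1)).coeff m • pow (todaM φ y) m := by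
          rw [← Finset.sum_add_distrib]
          apply Finset.sum_congr rfl
          intro m _
          rw [Polynomial.coeff_add, add_smul]
        rw [hsplit]
        have h2 : (∑ m ∈ Finset.range (k+1+1),
            (Polynomial.C c * Polynomial.X ^ (k+1)).coeff m • pow (todaM φ y) m)
            = c • pow (todaM φ y) (k+1) := by
          rw [Finset.sum_eq_single (k+1)]
          · simp [Polynomial.coeff_C_mul, Polynomial.coeff_X_pow]
          · intro m hm hne
            simp [Polynomial.coeff_C_mul, Polynomial.coeff_X_pow, if_neg hne]
          · intro habs
            exact absurd (Finset.self_mem_range_succ (k+1)) habs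
        rw [h2]
        simp [Pi.add_apply, Pi.smul_apply, smul_eq_mul]
      funext i j
      have hX'ij := congrFun (congrFun hA'eq i) j
      simp only [Pi.sub_apply, upper, lower] at hX'ij ⊢
      rw [hEval i j]
      rcases lt_trichotomy i j with h | h | h
      · rw [if_pos h, if_neg (lt_asymm h)] at hX'ij ⊢
        rw [hX'up i j h] at hX'ij
        linear_combination hX'ij
      · subst h
        rw [if_neg (lt_irrefl i)] at hX'ij ⊢
        rw [hX'di i] at hX'ij
        linear_combination hX'ij
      · rw [if_neg (lt_asymm h), if_pos h] at hX'ij ⊢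
        rw [hX'lo i j h] at hX'ij
        linear_combination hX'ij

/-- a periodic antisymmetric matrix of maximal degree `k` commuting
with the Toda Lax matrix `M` equals `A(M)₊ − A(M)₋` for a polynomial `A` of
degree at most `k`. -/
theorem antisymmetric_commutant_is_pm_polynomial
    (N : ℕ) (hN : 0 < N) (φ y : ℤ → ℂ)
    (hφ : ∀ i, φ (i + N) = φ i) (hy : ∀ i, y (i + N) = y i)
    (hy0 : ∀ i, y i ≠ 0)
    (k : ℕ) (X : Mat) (hXper : Periodic N X) (hXdeg : MaxDeg k X)
    (hXasym : ∀ i j, X i j = -X j i)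
    (hcomm : comm X (todaM φ y) = 0) :
    ∃ A : Polynomial ℂ, A.natDegree ≤ k ∧
      X = upper (evalPoly A (todaM φ y)) - lower (evalPoly A (todaM φ y)) := by
  apply main_lemma φ y hy0 k X hXasym hXdeg
  intro i j _
  have h := congrFun (congrFun hcomm i) j
  simp only [comm, Pi.sub_apply, Pi.zero_apply] at h
  rw [mul_todaM, todaM_mul] at h
  linear_combination h

end Toda
end

section
/- Let T(x) be a monic polynomial of degree 2k over ℂ with nonvanishing discriminant, and W'(x) a polynomial of degree n ≥ k. If the Laurent expansion at x = ∞ of W'(x)/√(T(x)) has vanishing coefficients of x^{−1}, x^{−2}, …, x^{−k} (equivalently, Res_{x=∞}(x^{j−1} W'(x)/√T(x)) = 0 for j = 1, …, k), then W'(x)² = T(x) G(x)² − f(x) for some polynomials G of degree n−k and f of degree at most n−1. -/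
namespace Toda

lemma single_pow (m : ℕ) :
    (HahnSeries.single (-1 : ℤ) (1:ℂ)) ^ m = HahnSeries.single (-(m:ℤ)) 1 := by
  induction m with
  | zero => simp [HahnSeries.single_zero_one]
  | succ n ih =>
    rw [pow_succ, ih, HahnSeries.single_mul_single]
    norm_num
    ring_nf

lemma atInf_coeff (p : Polynomial ℂ) (j : ℤ) :
    (atInf p).coeff j = if j ≤ 0 then p.coeff (-j).toNat else 0 := by
  induction p using Polynomial.induction_on' with
  | add p q hp hq =>
    rw [atInf, Polynomial.eval₂_add, ← atInf, ← atInf, HahnSeries.coeff_add, hp, hq,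
      Polynomial.coeff_add]
    split <;> simp
  | monomial m a =>
    have hC : (HahnSeries.C a : LaurentSeries ℂ) = HahnSeries.single (0:ℤ) a := rfl
    rw [atInf, Polynomial.eval₂_monomial, single_pow, hC, HahnSeries.single_mul_single,
      zero_add, HahnSeries.coeff_single, Polynomial.coeff_monomial]
    by_cases h : j = -(m:ℤ)
    · subst h
      simp [mul_one]
    · rw [if_neg h]
      by_cases h2 : j ≤ 0
      · rw [if_pos h2, if_neg (show ¬ m = (-j).toNat by omega)]
      · rw [if_neg h2]

/-- if the first `k` negative Laurent coefficients of `W'/√T` at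
infinity vanish, then `W'² = T G² − f` with `deg G = n − k`, `deg f ≤ n − 1`. -/
theorem residue_conditions_give_matrix_model_curve
    (k n : ℕ) (hk : 0 < k) (hkn : k ≤ n)
    (T : Polynomial ℂ) (hTmonic : T.Monic) (hTdeg : T.natDegree = 2 * k)
    (hTsf : Squarefree T)
    (s : LaurentSeries ℂ) (hs2 : s * s = atInf T)
    (hslead : s.coeff (-(k : ℤ)) = 1)
    (hsord : ∀ m : ℤ, m < -(k : ℤ) → s.coeff m = 0)
    (W' : Polynomial ℂ) (hW' : W'.natDegree = n)
    (hres : ∀ j : ℕ, 1 ≤ j → j ≤ k → (atInf W' / s).coeff (j : ℤ) = 0) :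
    ∃ G f : Polynomial ℂ, G.natDegree = n - k ∧ f.natDegree ≤ n - 1 ∧
      W' ^ 2 = T * G ^ 2 - f := by
  have hs0 : s ≠ 0 := fun h => by simp [h] at hslead
  set w := atInf W' with hw
  set r := atInf W' / s with hr
  have hrs : r * s = w := div_mul_cancel₀ _ hs0
  have hW'0 : W' ≠ 0 := by
    intro h
    rw [h, Polynomial.natDegree_zero] at hW'
    omega
  -- coefficient of w at -n is nonzero
  have hwn : w.coeff (-(n:ℤ)) ≠ 0 := by
    rw [hw, atInf_coeff, if_pos (by omega)]
    simp only [neg_neg, Int.toNat_natCast]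
    rw [← hW']
    exact Polynomial.leadingCoeff_ne_zero.mpr hW'0
  have hw0 : w ≠ 0 := fun h => by simp [h] at hwn
  have hwlow : ∀ j : ℤ, j < -(n:ℤ) → w.coeff j = 0 := by
    intro j hj
    rw [hw, atInf_coeff, if_pos (by omega)]
    apply Polynomial.coeff_eq_zero_of_natDegree_lt
    omega
  have hword : w.order = -(n:ℤ) := by
    refine le_antisymm (HahnSeries.order_le_of_coeff_ne_zero hwn) ?_
    by_contra h
    exact (mt HahnSeries.coeff_order_eq_zero.mp) hw0 (hwlow _ (by omega))
  have hsord' : s.order = -(k:ℤ) := by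
    refine le_antisymm (HahnSeries.order_le_of_coeff_ne_zero (by rw [hslead]; exact one_ne_zero)) ?_
    by_contra h
    exact (mt HahnSeries.coeff_order_eq_zero.mp) hs0 (hsord _ (by omega))
  have hr0 : r ≠ 0 := by
    intro h
    rw [h, zero_mul] at hrs
    exact hw0 hrs.symm
  have hrord : r.order = -((n:ℤ) - k) := by
    have := HahnSeries.order_mul hr0 hs0
    rw [hrs, hword, hsord'] at this
    omega
  have hrlow : ∀ j : ℤ, j < -((n:ℤ) - k) → r.coeff j = 0 := fun j hj =>
    HahnSeries.coeff_eq_zero_of_lt_order (by omega)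
  -- define G
  set G : Polynomial ℂ :=
    ∑ m ∈ Finset.range (n - k + 1), Polynomial.C (r.coeff (-(m:ℤ))) * Polynomial.X ^ m with hG
  have hGcoeff : ∀ m : ℕ, G.coeff m = if m ≤ n - k then r.coeff (-(m:ℤ)) else 0 := by
    intro m
    rw [hG, Polynomial.finset_sum_coeff]
    simp only [Polynomial.coeff_C_mul, Polynomial.coeff_X_pow, mul_ite, mul_one, mul_zero]
    rw [Finset.sum_ite_eq (Finset.range (n - k + 1)) m (fun i => r.coeff (-(i:ℤ)))]
    simp only [Finset.mem_range]
    split_ifs with h1 h2 h2 <;> first | rfl | omega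
  have hGtop : G.coeff (n - k) ≠ 0 := by
    rw [hGcoeff, if_pos le_rfl]
    have : -(((n - k : ℕ)):ℤ) = r.order := by rw [hrord]; omega
    rw [this]
    exact (mt HahnSeries.coeff_order_eq_zero.mp) hr0
  have hGdeg : G.natDegree = n - k := by
    refine le_antisymm (Polynomial.natDegree_le_iff_coeff_eq_zero.mpr fun m hm => ?_)
      (Polynomial.le_natDegree_of_ne_zero hGtop)
    rw [hGcoeff, if_neg (by omega)]
  set g := atInf G with hg
  -- g vanishes below -(n-k)
  have hglow : ∀ j : ℤ, j < -((n:ℤ) - k) → g.coeff j = 0 := by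
    intro j hj
    rw [hg, atInf_coeff]
    split
    · rw [hGcoeff, if_neg (by omega)]
    · rfl
  -- r - g vanishes at indices ≤ k
  have hdiff : ∀ j : ℤ, j ≤ (k:ℤ) → (r - g).coeff j = 0 := by
    intro j hj
    rw [HahnSeries.coeff_sub]
    rcases le_or_gt j 0 with hj0 | hj0
    · rcases lt_or_ge j (-((n:ℤ) - k)) with hjl | hjl
      · rw [hrlow j hjl, hglow j hjl, sub_zero]
      · rw [hg, atInf_coeff, if_pos hj0, hGcoeff, if_pos (by omega),
          show (-((-j).toNat : ℤ)) = j by omega, sub_self]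
    · have hres' := hres j.toNat (by omega) (by omega)
      rw [show ((j.toNat : ℤ)) = j by omega] at hres'
      rw [hg, atInf_coeff, if_neg (by omega), sub_zero]
      exact hres'
  -- orders of the two factors
  have hrho : ∀ j : ℤ, j ≤ 0 → (s * (r - g)).coeff j = 0 := by
    intro j hj
    by_cases hd : r - g = 0
    · rw [hd, mul_zero]; rfl
    · apply HahnSeries.coeff_eq_zero_of_lt_order
      rw [HahnSeries.order_mul hs0 hd, hsord']
      have hdord : (k:ℤ) + 1 ≤ (r - g).order := by
        by_contra h
        exact (mt HahnSeries.coeff_order_eq_zero.mp) hd (hdiff _ (by omega))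
      omega
  have hsig : ∀ j : ℤ, j < -(n:ℤ) → (w + s * g).coeff j = 0 := by
    intro j hj
    rw [HahnSeries.coeff_add, hwlow j hj]
    by_cases hg0 : g = 0
    · rw [hg0, mul_zero]; simp
    · rw [HahnSeries.coeff_eq_zero_of_lt_order, add_zero]
      rw [HahnSeries.order_mul hs0 hg0, hsord']
      have : -((n:ℤ) - k) ≤ g.order := by
        by_contra h
        exact (mt HahnSeries.coeff_order_eq_zero.mp) hg0 (hglow _ (by omega))
      omega
  set f : Polynomial ℂ := T * G ^ 2 - W' ^ 2 with hf
  have hfatInf : atInf f = (s * (r - g)) * (-(w + s * g)) + 0 := by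
    rw [hf, atInf, Polynomial.eval₂_sub, Polynomial.eval₂_mul, Polynomial.eval₂_pow,
      Polynomial.eval₂_pow, ← atInf, ← atInf, ← atInf, ← hs2, ← hg, ← hw, ← hrs]
    ring
  have hfcoeff : ∀ m : ℕ, n ≤ m → f.coeff m = 0 := by
    intro m hm
    have h1 : (atInf f).coeff (-(m:ℤ)) = f.coeff m := by
      rw [atInf_coeff, if_pos (by omega)]
      congr 1
      omega
    rw [← h1, hfatInf, add_zero]
    by_cases hd : s * (r - g) = 0
    · rw [hd, zero_mul]; rfl
    · by_cases hsg : (w + s * g) = 0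
      · rw [hsg, neg_zero, mul_zero]; rfl
      · apply HahnSeries.coeff_eq_zero_of_lt_order
        rw [HahnSeries.order_mul hd (neg_ne_zero.mpr hsg), HahnSeries.order_neg]
        have h2 : 1 ≤ (s * (r - g)).order := by
          by_contra h
          exact (mt HahnSeries.coeff_order_eq_zero.mp) hd (hrho _ (by omega))
        have h3 : -(n:ℤ) ≤ (w + s * g).order := by
          by_contra h
          exact (mt HahnSeries.coeff_order_eq_zero.mp) hsg (hsig _ (by omega))
        omega
  refine ⟨G, f, hGdeg, ?_, by rw [hf]; ring⟩
  exact Polynomial.natDegree_le_iff_coeff_eq_zero.mpr fun m hm => hfcoeff m (by omega)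


end Toda
end

section
/- Let M be an N-periodic infinite symmetric tridiagonal matrix with nonzero off-diagonals. If X is an N-periodic matrix of degree exactly 0 (diagonal) that commutes with M, then X = λ·I for some λ ∈ ℂ. Consequently, the Euclid-type algorithm on operators P_N(M)_+ − P_N(M)_− and W'(M)_+ − W'(M)_− terminates: after finitely many subtraction steps one obtains either zero or a scalar multiple of the identity. -/
namespace Toda

/-- a periodic diagonal matrix commuting with the Toda Lax matrix
is a scalar multiple of the identity (whence the Euclid-type algorithm
terminates in a scalar). -/
theorem diagonal_commutant_is_scalar
    (N : ℕ) (hN : 0 < N) (φ y : ℤ → ℂ)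
    (hφ : ∀ i, φ (i + N) = φ i) (hy : ∀ i, y (i + N) = y i)
    (hy0 : ∀ i, y i ≠ 0)
    (X : Mat) (hXper : Periodic N X) (hXdiag : HasDegree 0 X)
    (hcomm : comm X (todaM φ y) = 0) :
    ∃ lam : ℂ, X = lam • one := by
  classical
  -- Off-diagonal entries of X vanish
  have hoff : ∀ i j : ℤ, j ≠ i → X i j = 0 := by
    intro i j hji
    by_contra h
    exact hji (by simpa using hXdiag i j h)
  -- Compute the commutator entries
  have hmulXM : ∀ i j : ℤ, mul X (todaM φ y) i j = X i i * todaM φ y i j := by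
    intro i j
    unfold mul
    rw [tsum_eq_single i]
    intro k hk
    rw [hoff i k hk, zero_mul]
  have hmulMX : ∀ i j : ℤ, mul (todaM φ y) X i j = todaM φ y i j * X j j := by
    intro i j
    unfold mul
    rw [tsum_eq_single j]
    intro k hk
    rw [hoff k j (Ne.symm hk), mul_zero]
  have hstep : ∀ i : ℤ, X i i = X (i + 1) (i + 1) := by
    intro i
    have h := congrFun (congrFun hcomm i) (i + 1)
    simp only [comm, Pi.sub_apply, Pi.zero_apply] at h
    rw [hmulXM, hmulMX] at h
    have hM : todaM φ y i (i + 1) = y i := by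
      simp [todaM]
    rw [hM] at h
    have h2 : (X i i - X (i + 1) (i + 1)) * y i = 0 := by ring_nf; ring_nf at h; linear_combination h
    rcases mul_eq_zero.mp h2 with h3 | h3
    · exact sub_eq_zero.mp h3
    · exact absurd h3 (hy0 i)
  have hconst : ∀ i : ℤ, X i i = X 0 0 := by
    intro i
    induction i using Int.induction_on with
    | zero => rfl
    | succ k ih => rw [← hstep k] at *; exact ih
    | pred k ih => rw [hstep (-(k:ℤ) - 1)]; simpa [sub_add_cancel] using ih
  refine ⟨X 0 0, ?_⟩
  funext i j
  by_cases hij : j = i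
  · subst hij
    simp [one, hconst j, Pi.smul_apply]
  · simp [one, hoff i j hij, Ne.symm hij]

end Toda
end
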